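/- Let Π be a rectagraph. If π : Q_n → Π and θ : Q_n → Π are coverings from the n-cube with 0·π = 0·θ and e_i·π = e_i·θ for all i ≤ n (where e_i is the i-th standard basis vector), then π = θ. -/

import Mathlib

/-- The `n`-cube: vertices are vectors in `𝔽₂ⁿ`, adjacent iff at Hamming distance 1. -/
def cube (n : ℕ) : SimpleGraph (Fin n → ZMod 2) where
  Adj x y := hammingDist x y = 1
  symm := ⟨fun x y h => by rwa [hammingDist_comm] at h⟩
  loopless := ⟨fun x h => by simp [hammingDist_self] at h⟩

/-- A rectagraph: a connected triangle-free graph in which every 2-arc lies in a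
unique quadrangle. -/
def IsRectagraph {V : Type*} (P : SimpleGraph V) : Prop :=
  P.Connected ∧ P.CliqueFree 3 ∧
    ∀ u v w : V, P.Adj v u → P.Adj v w → u ≠ w →
      ∃! x : V, x ≠ v ∧ P.Adj u x ∧ P.Adj w x

/-- `f` is a covering from `G` to `H`. -/
def IsCovering {V W : Type*} (G : SimpleGraph V) (H : SimpleGraph W)
    (f : V → W) : Prop :=
  Function.Surjective f ∧
    ∀ x : V, Set.BijOn f (G.neighborSet x) (H.neighborSet (f x))

/-- The standard basis vector `e_i` of `𝔽₂ⁿ`. -/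
def stdBasis (n : ℕ) (i : Fin n) : Fin n → ZMod 2 :=
  fun k => if k = i then 1 else 0

lemma zmod2_ne_zero {a : ZMod 2} (h : a ≠ 0) : a = 1 := by
  revert h; revert a; decide

lemma stdBasis_apply_ne {n : ℕ} {i k : Fin n} (h : k ≠ i) : stdBasis n i k = 0 := if_neg h
lemma stdBasis_apply_self {n : ℕ} (i : Fin n) : stdBasis n i i = 1 := if_pos rfl

lemma cube_adj_add_single {n : ℕ} (x : Fin n → ZMod 2) (i : Fin n) :
    (cube n).Adj x (x + stdBasis n i) := by
  show hammingDist _ _ = 1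
  unfold hammingDist
  rw [Finset.card_eq_one]
  refine ⟨i, ?_⟩
  ext k
  simp only [Finset.mem_filter, Finset.mem_univ, true_and, Finset.mem_singleton, Pi.add_apply]
  constructor
  · intro h; by_contra hk
    exact h (by rw [stdBasis_apply_ne hk, add_zero])
  · rintro rfl
    rw [stdBasis_apply_self]
    intro h
    have : (1 : ZMod 2) = 0 := by
      have := (left_eq_add).1 h
      exact this
    exact one_ne_zero this

lemma norm_add_single {n : ℕ} {x : Fin n → ZMod 2} {i : Fin n} (h : x i ≠ 0) :
    hammingNorm (x + stdBasis n i) + 1 = hammingNorm x := by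
  unfold hammingNorm
  have heq : ({k | (x + stdBasis n i) k ≠ 0} : Finset (Fin n))
      = ({k | x k ≠ 0} : Finset (Fin n)).erase i := by
    ext k
    simp only [Finset.mem_filter, Finset.mem_erase, Finset.mem_univ, true_and, Pi.add_apply]
    by_cases hk : k = i
    · subst hk
      rw [stdBasis_apply_self, zmod2_ne_zero h]
      simp
      decide
    · rw [stdBasis_apply_ne hk, add_zero]
      tauto
  rw [heq, Finset.card_erase_of_mem (by simp [h])]
  have : 0 < ({k | x k ≠ 0} : Finset (Fin n)).card :=
    Finset.card_pos.2 ⟨i, by simp [h]⟩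
  omega

lemma eq_stdBasis {n : ℕ} {x : Fin n → ZMod 2} (h : hammingNorm x = 1) :
    ∃ i, x = stdBasis n i := by
  unfold hammingNorm at h
  obtain ⟨i, hi⟩ := Finset.card_eq_one.1 h
  refine ⟨i, funext fun k => ?_⟩
  by_cases hk : k = i
  · subst hk
    have : k ∈ ({j | x j ≠ 0} : Finset (Fin n)) := by rw [hi]; simp
    simp only [Finset.mem_filter, Finset.mem_univ, true_and] at this
    rw [stdBasis_apply_self, zmod2_ne_zero this]
  · have : k ∉ ({j | x j ≠ 0} : Finset (Fin n)) := by rw [hi]; simp [hk]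
    simp only [Finset.mem_filter, Finset.mem_univ, true_and, not_not] at this
    rw [stdBasis_apply_ne hk, this]

lemma add_single_ne_add_single {n : ℕ} (x : Fin n → ZMod 2) {i j : Fin n} (hij : i ≠ j) :
    x + stdBasis n i ≠ x + stdBasis n j := by
  intro h
  have h2 := congrFun h i
  simp only [Pi.add_apply, stdBasis_apply_self, stdBasis_apply_ne hij] at h2
  rw [add_zero] at h2
  exact one_ne_zero (left_eq_add.1 h2.symm)

lemma ne_add_single_add_single {n : ℕ} (x : Fin n → ZMod 2) {i j : Fin n} (hij : i ≠ j) :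
    x ≠ x + stdBasis n i + stdBasis n j := by
  intro h
  have h2 := congrFun h i
  simp only [Pi.add_apply, stdBasis_apply_self, stdBasis_apply_ne hij] at h2
  rw [add_zero] at h2
  exact one_ne_zero (left_eq_add.1 h2)

/-- Two coverings of a rectagraph by the `n`-cube agreeing at `0` and at every
standard basis vector are equal. -/
theorem covering_unique {n : ℕ} {V : Type*} [Finite V]
    (P : SimpleGraph V) (hP : IsRectagraph P)
    (f g : (Fin n → ZMod 2) → V)
    (hf : IsCovering (cube n) P f) (hg : IsCovering (cube n) P g)
    (h0 : f 0 = g 0) (he : ∀ i : Fin n, f (stdBasis n i) = g (stdBasis n i)) :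
    f = g := by
  have covAdj : ∀ (h : (Fin n → ZMod 2) → V), IsCovering (cube n) P h →
      ∀ {a b}, (cube n).Adj a b → P.Adj (h a) (h b) := by
    intro h hh a b hab
    exact (hh.2 a).mapsTo hab
  have covInj : ∀ (h : (Fin n → ZMod 2) → V), IsCovering (cube n) P h →
      ∀ a b c, (cube n).Adj a b → (cube n).Adj a c → h b = h c → b = c := by
    intro h hh a b c hab hac heq
    exact (hh.2 a).injOn hab hac heq
  funext x
  suffices H : ∀ m (x : Fin n → ZMod 2), hammingNorm x = m → f x = g x from H _ x rfl
  intro m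
  induction m using Nat.strong_induction_on with
  | _ m IH =>
  intro x hx
  rcases Nat.lt_or_ge m 2 with hm | hm
  · interval_cases m
    · rw [hammingNorm_eq_zero] at hx
      subst hx; exact h0
    · obtain ⟨i, rfl⟩ := eq_stdBasis hx
      exact he i
  · have h2 : 1 < ({k | x k ≠ 0} : Finset (Fin n)).card := by
      unfold hammingNorm at hx; omega
    obtain ⟨i, hi, j, hj, hij⟩ := Finset.one_lt_card.1 h2
    simp only [Finset.mem_filter, Finset.mem_univ, true_and] at hi hj
    have axu := cube_adj_add_single x i
    have axw := cube_adj_add_single x j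
    have auv := cube_adj_add_single (x + stdBasis n i) j
    have hvw : x + stdBasis n i + stdBasis n j = (x + stdBasis n j) + stdBasis n i := by ring
    have awv : (cube n).Adj (x + stdBasis n j) (x + stdBasis n i + stdBasis n j) := by
      rw [hvw]; exact cube_adj_add_single (x + stdBasis n j) i
    have wu : hammingNorm (x + stdBasis n i) + 1 = m := by rw [← hx]; exact norm_add_single hi
    have ww : hammingNorm (x + stdBasis n j) + 1 = m := by rw [← hx]; exact norm_add_single hj
    have huj : (x + stdBasis n i) j ≠ 0 := by
      show x j + stdBasis n i j ≠ 0
      rw [stdBasis_apply_ne (Ne.symm hij), add_zero]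
      exact hj
    have wv : hammingNorm (x + stdBasis n i + stdBasis n j) + 1
        = hammingNorm (x + stdBasis n i) := norm_add_single huj
    have hfu : f (x + stdBasis n i) = g (x + stdBasis n i) := IH _ (by omega) _ rfl
    have hfw : f (x + stdBasis n j) = g (x + stdBasis n j) := IH _ (by omega) _ rfl
    have hfv : f (x + stdBasis n i + stdBasis n j) = g (x + stdBasis n i + stdBasis n j) :=
      IH _ (by omega) _ rfl
    have hfufw : f (x + stdBasis n i) ≠ f (x + stdBasis n j) := fun hEq =>
      add_single_ne_add_single x hij (covInj f hf x _ _ axu axw hEq)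
    obtain ⟨y, -, hyuniq⟩ := hP.2.2 (f (x + stdBasis n i)) (f (x + stdBasis n i + stdBasis n j))
      (f (x + stdBasis n j)) (covAdj f hf auv).symm (covAdj f hf awv).symm hfufw
    have pf : f x ≠ f (x + stdBasis n i + stdBasis n j) ∧
        P.Adj (f (x + stdBasis n i)) (f x) ∧ P.Adj (f (x + stdBasis n j)) (f x) := by
      refine ⟨?_, covAdj f hf axu.symm, covAdj f hf axw.symm⟩
      intro hEq
      exact ne_add_single_add_single x hij (covInj f hf _ x _ axu.symm auv hEq)
    have pg : g x ≠ f (x + stdBasis n i + stdBasis n j) ∧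
        P.Adj (f (x + stdBasis n i)) (g x) ∧ P.Adj (f (x + stdBasis n j)) (g x) := by
      refine ⟨?_, ?_, ?_⟩
      · intro hEq
        exact ne_add_single_add_single x hij (covInj g hg _ x _ axu.symm auv (by rw [hEq, hfv]))
      · rw [hfu]; exact covAdj g hg axu.symm
      · rw [hfw]; exact covAdj g hg axw.symm
    exact (hyuniq (f x) pf).trans (hyuniq (g x) pg).symm
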